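/- Fix η ∈ (0,1), γ > 0, r > 0, and suppose the regime condition u_q(θ) > √3 and u_p(θ) > √3 holds for every θ ∈ [0, π/2], with B(0) < 0 and B(π/2) > 0; let θ* ∈ (0, π/2) be the unique zero of the balance function B. Then the function P̃(θ) = P_q(θ) + P_p(θ) is strictly decreasing on [0, θ*], strictly increasing on [θ*, π/2], and attains its strict global minimum on [0, π/2] uniquely at θ = θ*. -/

import Mathlib

/-- The standard normal density `φ(x) = e^{-x²/2}/√(2π)`. -/
noncomputable def gaussPdf (x : ℝ) : ℝ := Real.exp (-x ^ 2 / 2) / Real.sqrt (2 * Real.pi)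

/-- The Gaussian tail `Q(x) = ∫_x^∞ φ(t) dt`. -/
noncomputable def gaussTail (x : ℝ) : ℝ := ∫ t in Set.Ioi x, gaussPdf t

/-- Isotropic loss-induced spread `s₀ = (1-η)/(2η)`. -/
noncomputable def s0 (η : ℝ) : ℝ := (1 - η) / (2 * η)

/-- The GKP lattice constant `a = √(2π)`. -/
noncomputable def aGKP : ℝ := Real.sqrt (2 * Real.pi)

/-- Effective spread `σ_q(θ) = √(s₀ + γ sin²θ)`. -/
noncomputable def sigq (η γ θ : ℝ) : ℝ := Real.sqrt (s0 η + γ * Real.sin θ ^ 2)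

/-- Effective spread `σ_p(θ) = √(s₀ + γ cos²θ)`. -/
noncomputable def sigp (η γ θ : ℝ) : ℝ := Real.sqrt (s0 η + γ * Real.cos θ ^ 2)

/-- Normalized correction radius `u_q(θ) = (a r / 2) / σ_q(θ)`. -/
noncomputable def uq (η γ r θ : ℝ) : ℝ := aGKP * r / 2 / sigq η γ θ

/-- Normalized correction radius `u_p(θ) = (a / (2r)) / σ_p(θ)`. -/
noncomputable def up (η γ r θ : ℝ) : ℝ := aGKP / (2 * r) / sigp η γ θ

/-- The balance function `B(θ) = r²·φ(u_q)/σ_q³ − φ(u_p)/σ_p³`. -/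
noncomputable def balance (η γ r θ : ℝ) : ℝ :=
  r ^ 2 * gaussPdf (uq η γ r θ) / sigq η γ θ ^ 3 - gaussPdf (up η γ r θ) / sigp η γ θ ^ 3

/-- Quadrature error probability `P_q(θ) = 2 Q(u_q(θ))`. -/
noncomputable def Pq (η γ r θ : ℝ) : ℝ := 2 * gaussTail (uq η γ r θ)

/-- Quadrature error probability `P_p(θ) = 2 Q(u_p(θ))`. -/
noncomputable def Pp (η γ r θ : ℝ) : ℝ := 2 * gaussTail (up η γ r θ)

/-- Logical error rate `P_err(θ) = 1 − (1 − P_q(θ))(1 − P_p(θ))`. -/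
noncomputable def Perr (η γ r θ : ℝ) : ℝ := 1 - (1 - Pq η γ r θ) * (1 - Pp η γ r θ)


section GKPHelpers

lemma gaussPdf_eq' (x : ℝ) : gaussPdf x = (Real.sqrt (2*Real.pi))⁻¹ * Real.exp (-(1/2) * x ^ 2) := by
  unfold gaussPdf; rw [div_eq_inv_mul]; ring_nf

lemma integrable_gaussPdf : MeasureTheory.Integrable gaussPdf := by
  simp only [funext gaussPdf_eq']
  exact (integrable_exp_neg_mul_sq (by norm_num : (0:ℝ) < 1/2)).const_mul _

lemma continuous_gaussPdf : Continuous gaussPdf := by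
  unfold gaussPdf
  fun_prop

lemma gaussTail_sub (a b : ℝ) (hab : a ≤ b) :
    gaussTail a = (∫ t in a..b, gaussPdf t) + gaussTail b := by
  unfold gaussTail
  rw [intervalIntegral.integral_of_le hab, ← MeasureTheory.setIntegral_union
    Set.Ioc_disjoint_Ioi_same measurableSet_Ioi integrable_gaussPdf.integrableOn
    integrable_gaussPdf.integrableOn, Set.Ioc_union_Ioi_eq_Ioi hab]

lemma gaussTail_eq (x : ℝ) : gaussTail x = gaussTail 0 - ∫ t in (0:ℝ)..x, gaussPdf t := by
  rcases le_total 0 x with h | h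
  · rw [gaussTail_sub 0 x h]; ring
  · rw [gaussTail_sub x 0 h, intervalIntegral.integral_symm]; ring

lemma hasDerivAt_gaussTail (x : ℝ) : HasDerivAt gaussTail (-(gaussPdf x)) x := by
  have h : HasDerivAt (fun y => ∫ t in (0:ℝ)..y, gaussPdf t) (gaussPdf x) x :=
    intervalIntegral.integral_hasDerivAt_right integrable_gaussPdf.intervalIntegrable
      (continuous_gaussPdf.stronglyMeasurableAtFilter _ _)
      continuous_gaussPdf.continuousAt
  have h2 := (hasDerivAt_const x (gaussTail 0)).sub h
  rw [zero_sub] at h2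
  exact h2.congr_of_eventuallyEq (Filter.Eventually.of_forall fun y => gaussTail_eq y)

variable {η γ r : ℝ}

lemma s0_pos (hη : η ∈ Set.Ioo (0:ℝ) 1) : 0 < s0 η :=
  div_pos (by linarith [hη.2]) (by linarith [hη.1])

lemma argq_pos (hη : η ∈ Set.Ioo (0:ℝ) 1) (hγ : 0 < γ) (θ : ℝ) :
    0 < s0 η + γ * Real.sin θ ^ 2 := by
  have := s0_pos hη; positivity

lemma argp_pos (hη : η ∈ Set.Ioo (0:ℝ) 1) (hγ : 0 < γ) (θ : ℝ) :
    0 < s0 η + γ * Real.cos θ ^ 2 := by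
  have := s0_pos hη; positivity

lemma sigq_pos (hη : η ∈ Set.Ioo (0:ℝ) 1) (hγ : 0 < γ) (θ : ℝ) : 0 < sigq η γ θ :=
  Real.sqrt_pos.2 (argq_pos hη hγ θ)

lemma sigp_pos (hη : η ∈ Set.Ioo (0:ℝ) 1) (hγ : 0 < γ) (θ : ℝ) : 0 < sigp η γ θ :=
  Real.sqrt_pos.2 (argp_pos hη hγ θ)

lemma aGKP_pos : 0 < aGKP := Real.sqrt_pos.2 (by positivity)

lemma hasDerivAt_sigq (hη : η ∈ Set.Ioo (0:ℝ) 1) (hγ : 0 < γ) (θ : ℝ) :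
    HasDerivAt (fun θ => sigq η γ θ)
      (γ * (2 * Real.sin θ * Real.cos θ) / (2 * sigq η γ θ)) θ := by
  have hin : HasDerivAt (fun θ => s0 η + γ * Real.sin θ ^ 2)
      (γ * (2 * Real.sin θ * Real.cos θ)) θ := by
    have := ((Real.hasDerivAt_sin θ).pow 2).const_mul γ
    simpa [mul_comm, mul_assoc, mul_left_comm] using this.const_add (s0 η)
  exact hin.sqrt (ne_of_gt (argq_pos hη hγ θ))

lemma hasDerivAt_sigp (hη : η ∈ Set.Ioo (0:ℝ) 1) (hγ : 0 < γ) (θ : ℝ) :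
    HasDerivAt (fun θ => sigp η γ θ)
      (γ * (-(2 * Real.sin θ * Real.cos θ)) / (2 * sigp η γ θ)) θ := by
  have hin : HasDerivAt (fun θ => s0 η + γ * Real.cos θ ^ 2)
      (γ * (-(2 * Real.sin θ * Real.cos θ))) θ := by
    have := ((Real.hasDerivAt_cos θ).pow 2).const_mul γ
    have h2 := this.const_add (s0 η)
    refine h2.congr_deriv ?_
    ring
  exact hin.sqrt (ne_of_gt (argp_pos hη hγ θ))

lemma hasDerivAt_uq (hη : η ∈ Set.Ioo (0:ℝ) 1) (hγ : 0 < γ) (θ : ℝ) :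
    HasDerivAt (fun θ => uq η γ r θ)
      (-(aGKP * r / 2 * (γ * (2 * Real.sin θ * Real.cos θ) / (2 * sigq η γ θ))) /
        sigq η γ θ ^ 2) θ := by
  have h := (hasDerivAt_const θ (aGKP * r / 2)).div (hasDerivAt_sigq hη hγ θ)
    (ne_of_gt (sigq_pos hη hγ θ))
  refine h.congr_deriv ?_
  ring

lemma hasDerivAt_up (hη : η ∈ Set.Ioo (0:ℝ) 1) (hγ : 0 < γ) (θ : ℝ) :
    HasDerivAt (fun θ => up η γ r θ)
      (-(aGKP / (2*r) * (γ * (-(2 * Real.sin θ * Real.cos θ)) / (2 * sigp η γ θ))) /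
        sigp η γ θ ^ 2) θ := by
  have h := (hasDerivAt_const θ (aGKP / (2*r))).div (hasDerivAt_sigp hη hγ θ)
    (ne_of_gt (sigp_pos hη hγ θ))
  refine h.congr_deriv ?_
  ring

lemma hasDerivAt_total (hη : η ∈ Set.Ioo (0:ℝ) 1) (hγ : 0 < γ) (hr : 0 < r) (θ : ℝ) :
    HasDerivAt (fun θ => Pq η γ r θ + Pp η γ r θ)
      (aGKP * γ * Real.sin θ * Real.cos θ / r * balance η γ r θ) θ := by
  have hq := (((hasDerivAt_gaussTail (uq η γ r θ)).comp θ
    (hasDerivAt_uq hη hγ θ)).const_mul 2 : HasDerivAt (fun θ => Pq η γ r θ) _ θ)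
  have hp := (((hasDerivAt_gaussTail (up η γ r θ)).comp θ
    (hasDerivAt_up hη hγ θ)).const_mul 2 : HasDerivAt (fun θ => Pp η γ r θ) _ θ)
  have h := hq.add hp
  refine h.congr_deriv ?_
  have hsq := ne_of_gt (sigq_pos hη hγ θ (γ := γ))
  have hsp := ne_of_gt (sigp_pos hη hγ θ (γ := γ))
  unfold balance
  field_simp
  ring

lemma gauss_h_deriv (c : ℝ) {σ : ℝ} (hσ : 0 < σ) :
    HasDerivAt (fun σ : ℝ => -(c^2/2) * (σ^2)⁻¹ - 3 * Real.log σ)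
      (c^2/σ^3 - 3/σ) σ := by
  have h1 := (((hasDerivAt_pow 2 σ).inv (by positivity)).const_mul (-(c^2/2))).sub
    ((Real.hasDerivAt_log (ne_of_gt hσ)).const_mul 3)
  refine h1.congr_deriv ?_
  field_simp
  ring

lemma g_mono {c σ1 σ2 : ℝ} (h1 : 0 < σ1) (h12 : σ1 < σ2) (hu : Real.sqrt 3 < c / σ2) :
    gaussPdf (c / σ1) / σ1 ^ 3 < gaussPdf (c / σ2) / σ2 ^ 3 := by
  have h2 : (0:ℝ) < σ2 := h1.trans h12
  have hs3 : (0:ℝ) ≤ Real.sqrt 3 := Real.sqrt_nonneg 3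
  have hcσ2 : Real.sqrt 3 * σ2 < c := (lt_div_iff₀ h2).mp hu
  set h : ℝ → ℝ := fun σ => -(c^2/2) * (σ^2)⁻¹ - 3 * Real.log σ with hh
  have key : ∀ σ, 0 < σ → gaussPdf (c/σ) / σ^3 = Real.exp (h σ) / Real.sqrt (2*Real.pi) := by
    intro σ hσ
    have e1 : Real.exp (h σ) = Real.exp (-(c/σ)^2/2) * (σ^3)⁻¹ := by
      rw [hh]
      simp only
      rw [sub_eq_add_neg, Real.exp_add]
      congr 1
      · congr 1
        rw [div_pow]
        ring
      · rw [show -(3 * Real.log σ) = Real.log (σ^3)⁻¹ by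
          rw [Real.log_inv, Real.log_pow]; push_cast; ring]
        exact Real.exp_log (by positivity)
    rw [e1]
    unfold gaussPdf
    field_simp
  have hmono : StrictMonoOn h (Set.Icc σ1 σ2) := by
    apply strictMonoOn_of_deriv_pos (convex_Icc _ _)
    · exact fun x hx => (gauss_h_deriv c (h1.trans_le hx.1)).continuousAt.continuousWithinAt
    · intro x hx
      rw [interior_Icc] at hx
      have hx0 : 0 < x := h1.trans hx.1
      rw [(gauss_h_deriv c hx0).deriv]
      have hcx : Real.sqrt 3 * x < c := by nlinarith [hx.2]
      have h3 : (3:ℝ) * x^2 < c^2 := by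
        nlinarith [Real.sq_sqrt (by norm_num : (0:ℝ) ≤ 3), mul_nonneg hs3 hx0.le]
      rw [sub_pos, div_lt_div_iff₀ hx0 (by positivity)]
      nlinarith
  have hlt : h σ1 < h σ2 := hmono (Set.left_mem_Icc.2 h12.le) (Set.right_mem_Icc.2 h12.le) h12
  rw [key σ1 h1, key σ2 h2]
  gcongr

lemma balance_strictMonoOn (hη : η ∈ Set.Ioo (0:ℝ) 1) (hγ : 0 < γ) (hr : 0 < r)
    (hreg : ∀ θ ∈ Set.Icc (0 : ℝ) (Real.pi / 2),
      Real.sqrt 3 < uq η γ r θ ∧ Real.sqrt 3 < up η γ r θ) :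
    StrictMonoOn (fun θ => balance η γ r θ) (Set.Icc 0 (Real.pi/2)) := by
  intro θ1 h1 θ2 h2 h12
  have hπ := Real.pi_pos
  have hsin : Real.sin θ1 < Real.sin θ2 := by
    apply Real.strictMonoOn_sin ⟨by linarith [h1.1], h1.2⟩ ⟨by linarith [h2.1], h2.2⟩ h12
  have hsin1 : 0 ≤ Real.sin θ1 := Real.sin_nonneg_of_nonneg_of_le_pi h1.1 (by linarith [h1.2])
  have hcos : Real.cos θ2 < Real.cos θ1 := by
    apply Real.strictAntiOn_cos ⟨h1.1, by linarith [h1.2]⟩ ⟨h2.1, by linarith [h2.2]⟩ h12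
  have hcos2 : 0 ≤ Real.cos θ2 := Real.cos_nonneg_of_mem_Icc ⟨by linarith [h2.1], h2.2⟩
  have hsq : sigq η γ θ1 < sigq η γ θ2 := by
    apply Real.sqrt_lt_sqrt (argq_pos hη hγ θ1).le
    have : Real.sin θ1 ^ 2 < Real.sin θ2 ^ 2 := by nlinarith
    nlinarith
  have hsp : sigp η γ θ2 < sigp η γ θ1 := by
    apply Real.sqrt_lt_sqrt (argp_pos hη hγ θ2).le
    have : Real.cos θ2 ^ 2 < Real.cos θ1 ^ 2 := by nlinarith
    nlinarith
  have tq : r ^ 2 * (gaussPdf (uq η γ r θ1) / sigq η γ θ1 ^ 3) <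
      r ^ 2 * (gaussPdf (uq η γ r θ2) / sigq η γ θ2 ^ 3) := by
    apply mul_lt_mul_of_pos_left _ (by positivity)
    exact g_mono (sigq_pos hη hγ θ1) hsq (hreg θ2 h2).1
  have tp : gaussPdf (up η γ r θ2) / sigp η γ θ2 ^ 3 <
      gaussPdf (up η γ r θ1) / sigp η γ θ1 ^ 3 := by
    exact g_mono (sigp_pos hη hγ θ2) hsp (hreg θ1 h1).2
  simp only [balance, mul_div_assoc]
  linarith

end GKPHelpers

/-- under the regime condition with `B(0) < 0 < B(π/2)`, letting
`θ* ∈ (0, π/2)` be the (unique) zero of the balance function, the total error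
`P̃ = P_q + P_p` is strictly decreasing on `[0, θ*]`, strictly increasing on `[θ*, π/2]`,
and attains its strict global minimum on `[0, π/2]` uniquely at `θ*`. -/
theorem total_error_min_at_balance_root (η γ r θs : ℝ) (hη : η ∈ Set.Ioo (0 : ℝ) 1)
    (hγ : 0 < γ) (hr : 0 < r)
    (hreg : ∀ θ ∈ Set.Icc (0 : ℝ) (Real.pi / 2),
      Real.sqrt 3 < uq η γ r θ ∧ Real.sqrt 3 < up η γ r θ)
    (hB0 : balance η γ r 0 < 0) (hB1 : 0 < balance η γ r (Real.pi / 2))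
    (hθs : θs ∈ Set.Ioo (0 : ℝ) (Real.pi / 2)) (hroot : balance η γ r θs = 0) :
    StrictAntiOn (fun θ => Pq η γ r θ + Pp η γ r θ) (Set.Icc 0 θs) ∧
    StrictMonoOn (fun θ => Pq η γ r θ + Pp η γ r θ) (Set.Icc θs (Real.pi / 2)) ∧
    ∀ θ ∈ Set.Icc (0 : ℝ) (Real.pi / 2), θ ≠ θs →
      Pq η γ r θs + Pp η γ r θs < Pq η γ r θ + Pp η γ r θ := by
  obtain ⟨hθs0, hθs1⟩ := hθs
  have hπ := Real.pi_pos
  have hBmono := balance_strictMonoOn hη hγ hr hreg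
  have hθsIcc : θs ∈ Set.Icc (0:ℝ) (Real.pi/2) := ⟨hθs0.le, hθs1.le⟩
  -- sign of the derivative
  have hderiv : ∀ θ, deriv (fun θ => Pq η γ r θ + Pp η γ r θ) θ =
      aGKP * γ * Real.sin θ * Real.cos θ / r * balance η γ r θ :=
    fun θ => (hasDerivAt_total hη hγ hr θ).deriv
  have hcont : ContinuousOn (fun θ => Pq η γ r θ + Pp η γ r θ) Set.univ :=
    fun x _ => (hasDerivAt_total hη hγ hr x).continuousAt.continuousWithinAt
  have hfactor_pos : ∀ θ ∈ Set.Ioo (0:ℝ) (Real.pi/2),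
      0 < aGKP * γ * Real.sin θ * Real.cos θ / r := by
    intro θ hθ
    have hs : 0 < Real.sin θ := Real.sin_pos_of_pos_of_lt_pi hθ.1 (by linarith [hθ.2])
    have hc : 0 < Real.cos θ := Real.cos_pos_of_mem_Ioo ⟨by linarith [hθ.1], hθ.2⟩
    have := aGKP_pos
    positivity
  have hanti : StrictAntiOn (fun θ => Pq η γ r θ + Pp η γ r θ) (Set.Icc 0 θs) := by
    apply strictAntiOn_of_deriv_neg (convex_Icc _ _) (hcont.mono (Set.subset_univ _))
    intro x hx
    rw [interior_Icc] at hx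
    have hxIoo : x ∈ Set.Ioo (0:ℝ) (Real.pi/2) := ⟨hx.1, hx.2.trans hθs1⟩
    have hBx : balance η γ r x < 0 := by
      have := hBmono ⟨hxIoo.1.le, hxIoo.2.le⟩ hθsIcc hx.2
      simpa [hroot] using this
    rw [hderiv x]
    exact mul_neg_of_pos_of_neg (hfactor_pos x hxIoo) hBx
  have hmono : StrictMonoOn (fun θ => Pq η γ r θ + Pp η γ r θ) (Set.Icc θs (Real.pi/2)) := by
    apply strictMonoOn_of_deriv_pos (convex_Icc _ _) (hcont.mono (Set.subset_univ _))
    intro x hx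
    rw [interior_Icc] at hx
    have hxIoo : x ∈ Set.Ioo (0:ℝ) (Real.pi/2) := ⟨hθs0.trans hx.1, hx.2⟩
    have hBx : 0 < balance η γ r x := by
      have := hBmono hθsIcc ⟨hxIoo.1.le, hxIoo.2.le⟩ hx.1
      simpa [hroot] using this
    rw [hderiv x]
    exact mul_pos (hfactor_pos x hxIoo) hBx
  refine ⟨hanti, hmono, ?_⟩
  intro θ hθ hne
  rcases lt_or_gt_of_ne hne with h | h
  · exact hanti ⟨hθ.1, h.le⟩ ⟨hθs0.le, le_refl _⟩ h
  · exact hmono ⟨le_refl _, hθs1.le⟩ ⟨h.le, hθ.2⟩ h
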